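/- With A, (·,·), Q as above and {F,G} := (F,QG), the bracket {·,·} satisfies the graded Jacobi identity modulo the ideal I generated by the image of Q: Σ_{cyclic F,G,H} (-1)^{|F||H|} {F,{G,H}} ∈ I for all homogeneous F,G,H ∈ A. -/

import Mathlib

section stmt3aux
variable {A : Type*} [Ring A]

private lemma stmt3_e_mul (a b : ZMod 2) (x : A) :
    ((-1:A))^a.val * ((-1:A)^b.val * x) = (-1:A)^(a+b).val * x := by
  rw [← mul_assoc, ← pow_add, ZMod.val_add, ← neg_one_pow_eq_pow_mod_two (R := A)]

private lemma stmt3_e_succ (a : ZMod 2) : ((-1:A))^(a+1).val = -((-1:A))^a.val := by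
  fin_cases a
  · show (-1:A)^1 = -(-1:A)^0
    simp
  · show (-1:A)^0 = -(-1:A)^1
    simp

end stmt3aux

theorem stmt_3 {k A : Type*} [Field k] [CharZero k] [Ring A] [Algebra k A]
    (H : ZMod 2 → A → Prop)
    (br : A → A → A)
    (hbr_addl : ∀ F G X : A, br (F + G) X = br F X + br G X)
    (hbr_addr : ∀ F G X : A, br X (F + G) = br X F + br X G)
    (hsupercomm : ∀ (p q : ZMod 2) (F G : A), H p F → H q G →
      F * G = (-1 : A) ^ (p * q).val * (G * F))
    (hbr_grade : ∀ (p q : ZMod 2) (F G : A), H p F → H q G → H (p + q + 1) (br F G))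
    (hanti : ∀ (p q : ZMod 2) (F G : A), H p F → H q G →
      br F G = -((-1 : A) ^ ((p + 1) * (q + 1)).val * br G F))
    (hleib : ∀ (p q : ZMod 2) (F G X : A), H p F → H q G →
      br F (G * X) = br F G * X + (-1 : A) ^ (q * (p + 1)).val * (G * br F X))
    (hjac : ∀ (p q r : ZMod 2) (F G X : A), H p F → H q G → H r X →
      (-1 : A) ^ ((p + 1) * (r + 1)).val * br F (br G X)
        + (-1 : A) ^ ((q + 1) * (p + 1)).val * br G (br X F)
        + (-1 : A) ^ ((r + 1) * (q + 1)).val * br X (br F G) = 0)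
    (Q : A → A)
    (hQadd : ∀ F G : A, Q (F + G) = Q F + Q G)
    (hQodd : ∀ (p : ZMod 2) (F : A), H p F → H (p + 1) (Q F))
    (hQder : ∀ (p : ZMod 2) (F G : A), H p F →
      Q (F * G) = Q F * G + (-1 : A) ^ p.val * (F * Q G))
    (hQbr : ∀ (p : ZMod 2) (F G : A), H p F →
      Q (br F G) = br (Q F) G + (-1 : A) ^ ((p + 1 : ZMod 2)).val * br F (Q G))
    (hQQ : ∀ F : A, Q (Q F) = 0)
    :
    ∀ (p q r : ZMod 2) (F G X : A), H p F → H q G → H r X →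
      (-1 : A) ^ (p * r).val * br F (Q (br G (Q X)))
        + (-1 : A) ^ (q * p).val * br G (Q (br X (Q F)))
        + (-1 : A) ^ (r * q).val * br X (Q (br F (Q G)))
        ∈ Ideal.span (Set.range Q) := by
  intro p q r F G X hF hG hX
  have h11 : (1 + 1 : ZMod 2) = 0 := rfl
  have hr2 : (r + 1 + 1 : ZMod 2) = r := by rw [add_assoc, h11, add_zero]
  have hq2 : (q + 1 + 1 : ZMod 2) = q := by rw [add_assoc, h11, add_zero]
  -- bracket with zero
  have brz_r : ∀ Y : A, br Y 0 = 0 := by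
    intro Y
    have h := hbr_addr 0 0 Y
    rw [add_zero] at h
    exact (left_eq_add.mp h)
  have brz_l : ∀ Y : A, br 0 Y = 0 := by
    intro Y
    have h := hbr_addl 0 0 Y
    rw [add_zero] at h
    exact (left_eq_add.mp h)
  have brneg_r : ∀ Y x : A, br Y (-x) = -br Y x := by
    intro Y x
    have h := hbr_addr x (-x) Y
    rw [add_neg_cancel, brz_r] at h
    exact (neg_eq_of_add_eq_zero_right h.symm).symm
  have brpow_r : ∀ (n : ℕ) (Y x : A), br Y ((-1:A)^n * x) = (-1:A)^n * br Y x := by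
    intro n Y x
    rcases Nat.even_or_odd n with he | ho
    · rw [he.neg_one_pow, one_mul, one_mul]
    · rw [ho.neg_one_pow, neg_one_mul, neg_one_mul, brneg_r]
  have hQG := hQodd q G hG
  have hQX := hQodd r X hX
  have hQF := hQodd p F hF
  have E1 : Q (br G (Q X)) = br (Q G) (Q X) := by
    rw [hQbr q G (Q X) hG, hQQ, brz_r, mul_zero, add_zero]
  have E2 : Q (br X (Q F)) = br (Q X) (Q F) := by
    rw [hQbr r X (Q F) hX, hQQ, brz_r, mul_zero, add_zero]
  have E3 : Q (br F (Q G)) = br (Q F) (Q G) := by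
    rw [hQbr p F (Q G) hF, hQQ, brz_r, mul_zero, add_zero]
  have E4a : Q (br (Q X) F) = (-1:A)^(r.val) * br (Q X) (Q F) := by
    rw [hQbr (r+1) (Q X) F hQX, hQQ, brz_l, zero_add, hr2]
  have E4 : br (Q G) (br (Q X) F)
      = Q (br G (br (Q X) F)) - (-1:A)^((q+1+r : ZMod 2)).val * br G (br (Q X) (Q F)) := by
    have h := hQbr q G (br (Q X) F) hG
    rw [E4a, brpow_r, stmt3_e_mul] at h
    exact eq_sub_of_add_eq h.symm
  have E5 : br (Q X) (br F (Q G))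
      = Q (br X (br F (Q G))) - (-1:A)^((r+1 : ZMod 2)).val * br X (br (Q F) (Q G)) := by
    have h := hQbr r X (br F (Q G)) hX
    rw [E3] at h
    exact eq_sub_of_add_eq h.symm
  have J := hjac p (q+1) (r+1) F (Q G) (Q X) hF hQG hQX
  rw [hr2, hq2] at J
  -- multiply J by (-1)^r
  have J2 := congrArg (fun t => (-1:A)^(r.val) * t) J
  simp only [mul_add ((-1:A)^(r.val)), mul_zero, stmt3_e_mul] at J2
  have z1 : ∀ a b : ZMod 2, b + (a+1)*b = a*b := by decide
  have z2 : ∀ a b c : ZMod 2, c + a*(b+1) = a*b+a+c := by decide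
  rw [z1 p r, z2 q p r] at J2
  rw [E4, E5] at J2
  simp only [mul_sub, stmt3_e_mul] at J2
  have z3 : ∀ a b c : ZMod 2, a*b+a+c + (a+1+c) = a*b+1 := by decide
  have z4 : ∀ a c : ZMod 2, c + c*a + (c+1) = c*a+1 := by decide
  rw [z3 q p r, z4 q r, stmt3_e_succ (q*p), stmt3_e_succ (r*q)] at J2
  rw [E1, E2, E3]
  have key : (-1 : A) ^ (p * r).val * br F (br (Q G) (Q X))
        + (-1 : A) ^ (q * p).val * br G (br (Q X) (Q F))
        + (-1 : A) ^ (r * q).val * br X (br (Q F) (Q G))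
      = -((-1:A)^((q*p+q+r : ZMod 2)).val * Q (br G (br (Q X) F)))
        - (-1:A)^((r + r*q : ZMod 2)).val * Q (br X (br F (Q G))) := by
    simp only [neg_mul, sub_neg_eq_add] at J2
    linear_combination (norm := noncomm_ring) J2
  rw [key]
  refine Submodule.sub_mem _ (Submodule.neg_mem _ ?_) ?_ <;>
    exact Ideal.mul_mem_left _ _ (Ideal.subset_span ⟨_, rfl⟩)
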